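/- Let 𝕏 be a semi-abelian category and let (𝒮, 𝒢) ≤ (𝒯, ℱ) be torsion theories in 𝕏 (i.e. 𝒮 ⊆ 𝒯). For an object X denote by 0 → T(X) →t_X X →f_X F(X) → 0 and 0 → S(X) →s_X X →g_X G(X) → 0 the short exact sequences associated to (𝒯, ℱ) and (𝒮, 𝒢) respectively. Then the pair (𝒯, 𝒢) is a 𝒵-pretorsion theory in 𝕏 with class of trivial objects 𝒵 = 𝒯 ∩ 𝒢, and for each object X the sequence T(X) →t_X X →g_X G(X) is a short 𝒵-preexact sequence. -/

import Mathlib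

open CategoryTheory CategoryTheory.Limits

universe v u

variable {C : Type u} [Category.{v} C]

/-- A pair of composable morphisms is a short exact sequence if the composite is zero,
the first morphism is a kernel of the second and the second is a cokernel of the first. -/
def IsShortExact [HasZeroMorphisms C] {A X B : C} (i : A ⟶ X) (p : X ⟶ B) : Prop :=
  ∃ w : i ≫ p = 0,
    Nonempty (IsLimit (KernelFork.ofι i w)) ∧ Nonempty (IsColimit (CokernelCofork.ofπ p w))

/-- A torsion theory: a pair of full replete subcategories (given as predicates on objects)
such that every morphism from a torsion object to a torsion-free object is zero, and every
object fits in a short exact sequence with torsion kernel part and torsion-free cokernel part. -/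
structure IsTorsionTheory [HasZeroMorphisms C] (T F : C → Prop) : Prop where
  t_replete : ∀ {X Y : C}, (X ≅ Y) → T X → T Y
  f_replete : ∀ {X Y : C}, (X ≅ Y) → F X → F Y
  hom_zero : ∀ {X Y : C} (f : X ⟶ Y), T X → F Y → f = 0
  exists_seq : ∀ X : C, ∃ (TX FX : C) (i : TX ⟶ X) (p : X ⟶ FX),
    T TX ∧ F FX ∧ IsShortExact i p

/-- A torsion theory relative to a class `E` of objects: TT1 holds for all objects, while the
short exact sequence is only required for objects of `E`. -/
structure IsRelTorsionTheory [HasZeroMorphisms C] (E T F : C → Prop) : Prop where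
  hom_zero : ∀ {X Y : C} (f : X ⟶ Y), T X → F Y → f = 0
  exists_seq : ∀ X : C, E X → ∃ (TX FX : C) (i : TX ⟶ X) (p : X ⟶ FX),
    T TX ∧ F FX ∧ IsShortExact i p

/-- A TTF (torsion torsion-free) theory: a triple of full subcategories whose two consecutive
pairs are torsion theories. -/
def IsTTF [HasZeroMorphisms C] (Cc T F : C → Prop) : Prop :=
  IsTorsionTheory Cc T ∧ IsTorsionTheory T F

/-- A semi-abelian category: pointed (zero object and zero morphisms), with binary coproducts,
Barr-exact (regular: finite limits, coequalizers of kernel pairs, pullback-stable regular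
epimorphisms; and every internal equivalence relation is a kernel pair) and Bourn protomodular
(the split short five lemma holds). -/
structure IsSemiAbelian (C : Type u) [Category.{v} C] [HasZeroMorphisms C] : Prop where
  hasZeroObject : HasZeroObject C
  hasBinaryCoproducts : HasBinaryCoproducts C
  hasFiniteLimits : HasFiniteLimits C
  hasCoequalizersOfKernelPairs :
    ∀ {X Y R : C} (f : X ⟶ Y) (p₁ p₂ : R ⟶ X) (w : p₁ ≫ f = p₂ ≫ f),
      Nonempty (IsLimit (PullbackCone.mk p₁ p₂ w)) → HasCoequalizer p₁ p₂
  regularEpiStable :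
    ∀ {X Y Z P : C} (f : X ⟶ Y) (g : Z ⟶ Y) (p₁ : P ⟶ X) (p₂ : P ⟶ Z) (w : p₁ ≫ f = p₂ ≫ g),
      Nonempty (IsLimit (PullbackCone.mk p₁ p₂ w)) → Nonempty (RegularEpi f) →
        Nonempty (RegularEpi p₂)
  equivalenceRelationsEffective :
    ∀ {R X : C} (p₁ p₂ : R ⟶ X),
      (∀ {W : C} (a b : W ⟶ R), a ≫ p₁ = b ≫ p₁ → a ≫ p₂ = b ≫ p₂ → a = b) →
      (∃ r : X ⟶ R, r ≫ p₁ = 𝟙 X ∧ r ≫ p₂ = 𝟙 X) →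
      (∃ s : R ⟶ R, s ≫ p₁ = p₂ ∧ s ≫ p₂ = p₁) →
      (∀ {P : C} (q₁ q₂ : P ⟶ R) (w : q₁ ≫ p₂ = q₂ ≫ p₁),
        Nonempty (IsLimit (PullbackCone.mk q₁ q₂ w)) →
          ∃ t : P ⟶ R, t ≫ p₁ = q₁ ≫ p₁ ∧ t ≫ p₂ = q₂ ≫ p₂) →
      ∃ (Y : C) (q : X ⟶ Y) (w : p₁ ≫ q = p₂ ≫ q),
        Nonempty (IsLimit (PullbackCone.mk p₁ p₂ w))
  splitShortFiveLemma :
    ∀ {K X Y K' X' Y' : C} (k : K ⟶ X) (f : X ⟶ Y) (s : Y ⟶ X)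
      (k' : K' ⟶ X') (f' : X' ⟶ Y') (s' : Y' ⟶ X')
      (α : K ⟶ K') (β : X ⟶ X') (γ : Y ⟶ Y'),
      s ≫ f = 𝟙 Y → s' ≫ f' = 𝟙 Y' →
      IsShortExact k f → IsShortExact k' f' →
      k ≫ β = α ≫ k' → f ≫ γ = β ≫ f' →
      IsIso α → IsIso γ → IsIso β

/-- Zero morphisms on a full subcategory, induced by those of the ambient category. -/
instance (Z : C → Prop) [HasZeroMorphisms C] : HasZeroMorphisms (ObjectProperty.FullSubcategory Z) where
  zero X Y := ⟨ObjectProperty.homMk (P := Z) (0 : X.obj ⟶ Y.obj)⟩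
  comp_zero {_X _Y} f Z' := by ext; exact Limits.comp_zero (C := C) (f := f.hom) (Z := Z'.obj)
  zero_comp X {_Y _Z'} f := by ext; exact Limits.zero_comp (C := C) (X := X.obj) (f := f.hom)

/-- A morphism is `𝒵`-trivial if it factors through an object of the class `Z`. -/
def ZTrivial (Z : C → Prop) {X Y : C} (f : X ⟶ Y) : Prop :=
  ∃ (W : C) (u : X ⟶ W) (v : W ⟶ Y), Z W ∧ u ≫ v = f

/-- `k` is a `𝒵`-prekernel of `f`: `k ≫ f` is `𝒵`-trivial, and every morphism `x` with
`x ≫ f` `𝒵`-trivial factors uniquely through `k`. -/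
def IsZPrekernel (Z : C → Prop) {K A B : C} (k : K ⟶ A) (f : A ⟶ B) : Prop :=
  ZTrivial Z (k ≫ f) ∧
    ∀ {X : C} (x : X ⟶ A), ZTrivial Z (x ≫ f) → ∃! l : X ⟶ K, l ≫ k = x

/-- `q` is a `𝒵`-precokernel of `f`: `f ≫ q` is `𝒵`-trivial, and every morphism `y` with
`f ≫ y` `𝒵`-trivial factors uniquely through `q`. -/
def IsZPrecokernel (Z : C → Prop) {A B Q : C} (f : A ⟶ B) (q : B ⟶ Q) : Prop :=
  ZTrivial Z (f ≫ q) ∧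
    ∀ {Y : C} (y : B ⟶ Y), ZTrivial Z (f ≫ y) → ∃! l : Q ⟶ Y, q ≫ l = y

/-- A short `𝒵`-preexact sequence. -/
def ZPreexact (Z : C → Prop) {T X F : C} (t : T ⟶ X) (g : X ⟶ F) : Prop :=
  IsZPrekernel Z t g ∧ IsZPrecokernel Z t g

/-- A `𝒵`-pretorsion theory with `𝒵 = 𝕋 ∩ 𝔽`: every morphism from `𝕋` to `𝔽` is
`𝒵`-trivial, and every object fits in a short `𝒵`-preexact sequence. -/
structure IsPretorsionTheory (TT FF : C → Prop) : Prop where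
  ztrivial_hom : ∀ {X Y : C} (f : X ⟶ Y), TT X → FF Y →
    ZTrivial (fun W => TT W ∧ FF W) f
  exists_seq : ∀ X : C, ∃ (TX FX : C) (t : TX ⟶ X) (g : X ⟶ FX),
    TT TX ∧ FF FX ∧ ZPreexact (fun W => TT W ∧ FF W) t g

section Aux

variable [HasZeroMorphisms C]

/-- From a short exact sequence, the second morphism is an epimorphism. -/
lemma IsShortExact.epi' {A X B : C} {i : A ⟶ X} {p : X ⟶ B} (h : IsShortExact i p) : Epi p := by
  obtain ⟨w, _, ⟨hc⟩⟩ := h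
  exact ⟨fun a b hab => Cofork.IsColimit.hom_ext hc (by simpa using hab)⟩

/-- From a short exact sequence, the first morphism is a monomorphism. -/
lemma IsShortExact.mono' {A X B : C} {i : A ⟶ X} {p : X ⟶ B} (h : IsShortExact i p) : Mono i := by
  obtain ⟨w, ⟨hk⟩, _⟩ := h
  exact ⟨fun a b hab => Fork.IsLimit.hom_ext hk (by simpa using hab)⟩

/-- Any morphism from a `T`-object to a `G`-object is `T ∩ G`-trivial. -/
lemma hom_ztrivial_aux {S G T F : C → Prop}
    (hTF : IsTorsionTheory T F) (hSG : IsTorsionTheory S G)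
    {X Y : C} (f : X ⟶ Y) (hX : T X) (hY : G Y) :
    ZTrivial (fun W => T W ∧ G W) f := by
  obtain ⟨SX, GX, s, g, hS, hG, hse⟩ := hSG.exists_seq X
  have hepi : Epi g := hse.epi'
  obtain ⟨w, ⟨hk⟩, ⟨hc⟩⟩ := hse
  -- GX is a torsion object: the torsion-free quotient of GX is trivial
  obtain ⟨T', F', i, p, hT', hF', hse2⟩ := hTF.exists_seq GX
  have hmono : Mono i := hse2.mono'
  obtain ⟨w2, ⟨hk2⟩, _⟩ := hse2
  have hp0 : p = 0 := by
    have h1 : g ≫ p = 0 := hTF.hom_zero _ hX hF'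
    exact hepi.left_cancellation p 0 (by simp [h1])
  obtain ⟨j, hj⟩ := KernelFork.IsLimit.lift' hk2 (𝟙 GX) (by simp [hp0])
  simp only [Fork.ι_ofι] at hj
  have hij : i ≫ j = 𝟙 T' := by
    apply hmono.right_cancellation
    rw [Category.assoc, hj, Category.id_comp, Category.comp_id]
  have hTGX : T GX := hTF.t_replete ⟨i, j, hij, hj⟩ hT'
  -- f factors through g
  have hsf : s ≫ f = 0 := hSG.hom_zero _ hS hY
  obtain ⟨h, hh⟩ := CokernelCofork.IsColimit.desc' hc f hsf
  simp only [Cofork.π_ofπ] at hh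
  exact ⟨GX, g, h, ⟨hTGX, hG⟩, hh⟩

end Aux

/-- Let `𝕏` be semi-abelian with torsion theories
`(𝒮, 𝒢) ≤ (𝒯, ℱ)`.  Then `(𝒯, 𝒢)` is a `𝒵`-pretorsion theory with
`𝒵 = 𝒯 ∩ 𝒢`, and for every object `X` the sequence `T(X) → X → G(X)` obtained from the
two associated short exact sequences is short `𝒵`-preexact. -/
theorem pretorsion_from_two_torsion_theories [HasZeroMorphisms C]
    (hC : IsSemiAbelian C) {S G T F : C → Prop}
    (hTF : IsTorsionTheory T F) (hSG : IsTorsionTheory S G)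
    (hle : ∀ X : C, S X → T X) :
    IsPretorsionTheory T G ∧
    ∀ (X TX FX SX GX : C) (t : TX ⟶ X) (f : X ⟶ FX) (s : SX ⟶ X) (g : X ⟶ GX),
      T TX → F FX → S SX → G GX → IsShortExact t f → IsShortExact s g →
      ZPreexact (fun W => T W ∧ G W) t g := by
  have main : ∀ (X TX FX SX GX : C) (t : TX ⟶ X) (f : X ⟶ FX) (s : SX ⟶ X) (g : X ⟶ GX),
      T TX → F FX → S SX → G GX → IsShortExact t f → IsShortExact s g →
      ZPreexact (fun W => T W ∧ G W) t g := by
      intro X TX FX SX GX t f s g hT hF hS hG het heg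
      have htmono : Mono t := het.mono'
      have hgepi : Epi g := heg.epi'
      obtain ⟨wt, ⟨hkT⟩, _⟩ := het
      obtain ⟨ws, ⟨hkS⟩, ⟨hcS⟩⟩ := heg
      have htriv : ZTrivial (fun W => T W ∧ G W) (t ≫ g) :=
        hom_ztrivial_aux hTF hSG _ hT hG
      have hsf : s ≫ f = 0 := hTF.hom_zero _ (hle _ hS) hF
      -- f factors through g
      obtain ⟨φ, hφ⟩ := CokernelCofork.IsColimit.desc' hcS f hsf
      simp only [Cofork.π_ofπ] at hφ
      -- s factors through t
      obtain ⟨σ, hσ⟩ := KernelFork.IsLimit.lift' hkT s hsf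
      simp only [Fork.ι_ofι] at hσ
      constructor
      · refine ⟨htriv, ?_⟩
        intro W x hx
        obtain ⟨Z0, u, v, ⟨hZT, hZG⟩, huv⟩ := hx
        have hxf : x ≫ f = 0 := by
          have hvφ : v ≫ φ = 0 := hTF.hom_zero _ hZT hF
          calc x ≫ f = x ≫ g ≫ φ := by rw [hφ]
            _ = (u ≫ v) ≫ φ := by rw [← Category.assoc, huv]
            _ = u ≫ v ≫ φ := by rw [Category.assoc]
            _ = 0 := by rw [hvφ, comp_zero]
        obtain ⟨l, hl⟩ := KernelFork.IsLimit.lift' hkT x hxf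
        simp only [Fork.ι_ofι] at hl
        exact ⟨l, hl, fun l' hl' => htmono.right_cancellation _ _ (by rw [hl', hl])⟩
      · refine ⟨htriv, ?_⟩
        intro Y y hy
        obtain ⟨Z0, u, v, ⟨hZT, hZG⟩, huv⟩ := hy
        have hsy : s ≫ y = 0 := by
          have hσu : σ ≫ u = 0 := hSG.hom_zero _ hS hZG
          calc s ≫ y = σ ≫ t ≫ y := by rw [← hσ, Category.assoc]
            _ = σ ≫ u ≫ v := by rw [← huv]
            _ = (σ ≫ u) ≫ v := by rw [Category.assoc]
            _ = 0 := by rw [hσu, zero_comp]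
        obtain ⟨l, hl⟩ := CokernelCofork.IsColimit.desc' hcS y hsy
        simp only [Cofork.π_ofπ] at hl
        exact ⟨l, hl, fun l' hl' => hgepi.left_cancellation _ _ (by rw [hl', hl])⟩
  refine ⟨⟨fun f hX hY => hom_ztrivial_aux hTF hSG f hX hY, ?_⟩, main⟩
  intro X
  obtain ⟨TX, FX, t, f, hT, hF, het⟩ := hTF.exists_seq X
  obtain ⟨SX, GX, s, g, hS, hG, heg⟩ := hSG.exists_seq X
  exact ⟨TX, GX, t, g, hT, hG, main X TX FX SX GX t f s g hT hF hS hG het heg⟩
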